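/- arXiv:1411.6846 — 8 statements merged into one kernel-verified Lean document; each statement's English description precedes it below -/
import Mathlib

section
/- (Concatenation lemma) Let h : ℕ → ℕ, let σ be a string, let A be a set of strings that is h-big above σ, and let (S_τ)_{τ ∈ A} be a family of sets of strings such that S_τ is h-big above τ for every τ ∈ A. Then the union ⋃_{τ ∈ A} S_τ is h-big above σ. -/
/-- A tree is a set of strings (finite sequences of naturals) closed under prefixes. -/
def IsTree (T : Set (List ℕ)) : Prop :=
  ∀ σ ∈ T, ∀ τ : List ℕ, τ <+: σ → τ ∈ T

/-- A leaf of `T` is an element of `T` with no immediate extension in `T`. -/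
def IsLeaf (T : Set (List ℕ)) (τ : List ℕ) : Prop :=
  τ ∈ T ∧ ∀ a : ℕ, τ ++ [a] ∉ T

/-- A tree `T` is `h`-bushy above `σ`: `σ ∈ T`, every element of `T` is comparable
with `σ`, and every non-leaf `τ ∈ T` extending `σ` has at least `h |τ|` immediate
extensions in `T`. -/
def BushyAbove (h : ℕ → ℕ) (σ : List ℕ) (T : Set (List ℕ)) : Prop :=
  IsTree T ∧ σ ∈ T ∧
  (∀ τ ∈ T, τ <+: σ ∨ σ <+: τ) ∧
  (∀ τ ∈ T, σ <+: τ → ¬ IsLeaf T τ → (h τ.length : ℕ∞) ≤ {a : ℕ | τ ++ [a] ∈ T}.encard)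

/-- `B` is `h`-big above `σ` if there is a finite tree, `h`-bushy above `σ`,
all of whose leaves belong to `B`. -/
def BigAbove (h : ℕ → ℕ) (σ : List ℕ) (B : Set (List ℕ)) : Prop :=
  ∃ T : Set (List ℕ), T.Finite ∧ BushyAbove h σ T ∧ ∀ τ, IsLeaf T τ → τ ∈ B

/-- `B` is `h`-small above `σ` if it is not `h`-big above `σ`. -/
def SmallAbove (h : ℕ → ℕ) (σ : List ℕ) (B : Set (List ℕ)) : Prop :=
  ¬ BigAbove h σ B

/-- In a tree, a strict prefix of an element has an immediate extension in the tree. -/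
lemma tree_ext_of_strict_prefix {T : Set (List ℕ)} (hT : IsTree T) {τ π : List ℕ}
    (hπ : π ∈ T) (hpre : τ <+: π) (hne : τ ≠ π) : ∃ a, τ ++ [a] ∈ T := by
  obtain ⟨r, rfl⟩ := hpre
  cases r with
  | nil => simp at hne
  | cons a r' =>
    exact ⟨a, hT _ hπ _ ⟨r', by simp⟩⟩

/-- A leaf of a tree cannot be a strict prefix of an element of the tree. -/
lemma leaf_eq_of_prefix {T : Set (List ℕ)} (hT : IsTree T) {τ π : List ℕ}
    (hτ : IsLeaf T τ) (hπ : π ∈ T) (hpre : τ <+: π) : τ = π := by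
  by_contra hne
  obtain ⟨a, ha⟩ := tree_ext_of_strict_prefix hT hπ hpre hne
  exact hτ.2 a ha

/-- Concatenation lemma: if `A` is `h`-big above `σ` and `S τ` is `h`-big above `τ`
for every `τ ∈ A`, then `⋃ τ ∈ A, S τ` is `h`-big above `σ`. -/
theorem concatenation (h : ℕ → ℕ) (σ : List ℕ) (A : Set (List ℕ))
    (hA : BigAbove h σ A) (S : List ℕ → Set (List ℕ))
    (hS : ∀ τ ∈ A, BigAbove h τ (S τ)) :
    BigAbove h σ (⋃ τ ∈ A, S τ) := by
  obtain ⟨T, hTfin, ⟨hTtree, hTσ, hTcomp, hTbushy⟩, hTleaf⟩ := hA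
  choose! F hFfin hFbushy hFleaf using hS
  -- the set of leaves of T
  set L : Set (List ℕ) := {τ | IsLeaf T τ} with hL
  have hLA : ∀ τ ∈ L, τ ∈ A := fun τ hτ => hTleaf τ hτ
  -- the combined tree
  set T' : Set (List ℕ) := T ∪ ⋃ τ ∈ L, F τ with hT'
  have hLfin : L.Finite := hTfin.subset (fun τ hτ => hτ.1)
  have hT'fin : T'.Finite := by
    refine hTfin.union (hLfin.biUnion fun τ hτ => ?_)
    exact hFfin τ (hLA τ hτ)
  -- roots of the subtrees
  have hroot : ∀ τ ∈ L, τ ∈ F τ := fun τ hτ => (hFbushy τ (hLA τ hτ)).2.1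
  have hFtree : ∀ τ ∈ L, IsTree (F τ) := fun τ hτ => (hFbushy τ (hLA τ hτ)).1
  have hFcomp : ∀ τ ∈ L, ∀ ρ ∈ F τ, ρ <+: τ ∨ τ <+: ρ :=
    fun τ hτ => (hFbushy τ (hLA τ hτ)).2.2.1
  -- elements of F τ that are prefixes of τ lie in T
  have hpreT : ∀ τ ∈ L, ∀ ρ : List ℕ, ρ <+: τ → ρ ∈ T :=
    fun τ hτ ρ hρ => hTtree τ hτ.1 ρ hρ
  -- key claim: if τ is a leaf of T, τ <+: ρ, ρ ∈ F τ, and ρ ++ [a] ∈ T',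
  -- then ρ ++ [a] ∈ F τ
  have key : ∀ τ ∈ L, ∀ ρ : List ℕ, τ <+: ρ → ∀ a : ℕ, ρ ++ [a] ∈ T' →
      ρ ++ [a] ∈ F τ := by
    intro τ hτ ρ hpre a hext
    rcases hext with hext | hext
    · -- ρ ++ [a] ∈ T : contradicts τ being a leaf of T
      exfalso
      have h1 : τ <+: ρ ++ [a] := hpre.trans (by simp)
      have h2 : τ = ρ ++ [a] := leaf_eq_of_prefix hTtree hτ hext h1
      have hlen : τ.length ≤ ρ.length := hpre.length_le
      have : τ.length = ρ.length + 1 := by rw [h2]; simp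
      omega
    · simp only [Set.mem_iUnion] at hext
      obtain ⟨τ', hτ', hmem⟩ := hext
      -- ρ ++ [a] ∈ F τ', comparable with τ'
      rcases hFcomp τ' hτ' _ hmem with hc | hc
      · -- ρ ++ [a] <+: τ', so ρ ++ [a] ∈ T, contradicting τ leaf strictly below it
        exfalso
        have hmemT : ρ ++ [a] ∈ T := hpreT τ' hτ' _ hc
        have h1 : τ <+: ρ ++ [a] := hpre.trans (by simp)
        have h2 : τ = ρ ++ [a] := leaf_eq_of_prefix hTtree hτ hmemT h1
        have hlen : τ.length ≤ ρ.length := hpre.length_le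
        have : τ.length = ρ.length + 1 := by rw [h2]; simp
        omega
      · -- τ' <+: ρ ++ [a]
        rcases List.prefix_concat_iff.mp hc with rfl | hc'
        · -- τ' = ρ ++ [a] ∈ T : same contradiction
          exfalso
          have hmemT : ρ ++ [a] ∈ T := hτ'.1
          have h1 : τ <+: ρ ++ [a] := hpre.trans (by simp)
          have h2 : τ = ρ ++ [a] := leaf_eq_of_prefix hTtree hτ hmemT h1
          have hlen : τ.length ≤ ρ.length := hpre.length_le
          have : τ.length = ρ.length + 1 := by rw [h2]; simp
          omega
        · -- τ' <+: ρ, and τ <+: ρ, so τ and τ' are comparable leaves, hence equal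
          have hcc := List.prefix_or_prefix_of_prefix hpre hc'
          have : τ = τ' := by
            rcases hcc with hcc | hcc
            · exact leaf_eq_of_prefix hTtree hτ hτ'.1 hcc
            · exact (leaf_eq_of_prefix hTtree hτ' hτ.1 hcc).symm
          subst this
          exact hmem
  -- every element of T' not in T lies strictly above a unique leaf of T
  have habove : ∀ ρ ∈ T', ρ ∉ T → ∃ τ ∈ L, τ <+: ρ ∧ ρ ∈ F τ := by
    intro ρ hρ hρT
    rcases hρ with hρ | hρ
    · exact absurd hρ hρT
    · simp only [Set.mem_iUnion] at hρ
      obtain ⟨τ, hτ, hmem⟩ := hρ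
      refine ⟨τ, hτ, ?_, hmem⟩
      rcases hFcomp τ hτ _ hmem with hc | hc
      · exact absurd (hpreT τ hτ _ hc) hρT
      · exact hc
  refine ⟨T', hT'fin, ⟨?_, Or.inl hTσ, ?_, ?_⟩, ?_⟩
  · -- T' is a tree
    intro ρ hρ π hπ
    rcases hρ with hρ | hρ
    · exact Or.inl (hTtree ρ hρ π hπ)
    · simp only [Set.mem_iUnion] at hρ
      obtain ⟨τ, hτ, hmem⟩ := hρ
      exact Or.inr (Set.mem_biUnion hτ (hFtree τ hτ ρ hmem π hπ))
  · -- comparability with σ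
    intro ρ hρ
    rcases hρ with hρ | hρ
    · exact hTcomp ρ hρ
    · simp only [Set.mem_iUnion] at hρ
      obtain ⟨τ, hτ, hmem⟩ := hρ
      have hστ : σ <+: τ := by
        rcases hTcomp τ hτ.1 with hc | hc
        · exact (leaf_eq_of_prefix hTtree hτ hTσ hc) ▸ List.prefix_refl σ
        · exact hc
      rcases hFcomp τ hτ _ hmem with hc | hc
      · exact List.prefix_or_prefix_of_prefix (hc.trans (List.prefix_refl τ)) hστ
          |>.imp id id |>.symm.imp id id |>.elim
          (fun h' => Or.inr h') (fun h' => Or.inl h')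
      · exact Or.inr (hστ.trans hc)
  · -- bushiness
    intro ρ hρ hσρ hnl
    -- find the subtree responsible for extensions of ρ
    by_cases hρT : ρ ∈ T
    · by_cases hρleaf : IsLeaf T ρ
      · -- ρ is a leaf of T, hence a root of F ρ
        have hρL : ρ ∈ L := hρleaf
        have hρF : ρ ∈ F ρ := hroot ρ hρL
        have hnlF : ¬ IsLeaf (F ρ) ρ := by
          intro hlf
          apply hnl
          refine ⟨Or.inl hρT, fun a ha => ?_⟩
          exact hlf.2 a (key ρ hρL ρ (List.prefix_refl ρ) a ha)
        have := (hFbushy ρ (hLA ρ hρL)).2.2.2 ρ hρF (List.prefix_refl ρ) hnlF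
        refine this.trans (Set.encard_mono ?_)
        intro a ha
        exact Or.inr (Set.mem_biUnion hρL ha)
      · -- ρ is not a leaf of T: use bushiness of T
        have := hTbushy ρ hρT hσρ hρleaf
        refine this.trans (Set.encard_mono ?_)
        intro a ha
        exact Or.inl ha
    · -- ρ ∉ T: it lies strictly above a leaf τ of T, inside F τ
      obtain ⟨τ, hτ, hpre, hmem⟩ := habove ρ hρ hρT
      have hnlF : ¬ IsLeaf (F τ) ρ := by
        intro hlf
        apply hnl
        refine ⟨hρ, fun a ha => ?_⟩
        exact hlf.2 a (key τ hτ ρ hpre a ha)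
      have hτρ : τ <+: ρ := hpre
      have := (hFbushy τ (hLA τ hτ)).2.2.2 ρ hmem hτρ hnlF
      refine this.trans (Set.encard_mono ?_)
      intro a ha
      exact Or.inr (Set.mem_biUnion hτ ha)
  · -- leaves of T' lie in the union
    intro ρ hρ
    have hρT' : ρ ∈ T' := hρ.1
    by_cases hρT : ρ ∈ T
    · -- ρ must be a leaf of T
      have hρleaf : IsLeaf T ρ := by
        refine ⟨hρT, fun a ha => hρ.2 a (Or.inl ha)⟩
      have hρL : ρ ∈ L := hρleaf
      have hρF : ρ ∈ F ρ := hroot ρ hρL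
      have hlfF : IsLeaf (F ρ) ρ := by
        refine ⟨hρF, fun a ha => hρ.2 a (Or.inr (Set.mem_biUnion hρL ha))⟩
      have := hFleaf ρ (hLA ρ hρL) ρ hlfF
      exact Set.mem_biUnion (hLA ρ hρL) this
    · obtain ⟨τ, hτ, hpre, hmem⟩ := habove ρ hρT' hρT
      have hlfF : IsLeaf (F τ) ρ := by
        refine ⟨hmem, fun a ha => hρ.2 a (Or.inr (Set.mem_biUnion hτ ha))⟩
      exact Set.mem_biUnion (hLA τ hτ) (hFleaf τ (hLA τ hτ) ρ hlfF)
end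

section
/- (Concatenation lemma, contrapositive form) Let h : ℕ → ℕ, let σ be a string, let T be a finite tree that is h-bushy above σ, and let B be a set of strings that is h-small above σ. Then T has a leaf τ (necessarily extending σ) such that B is h-small above τ. -/
private lemma exists_succ_prefix {τ ρ : List ℕ} (h1 : τ <+: ρ) (h2 : τ ≠ ρ) :
    ∃ a, τ ++ [a] <+: ρ := by
  obtain ⟨t, rfl⟩ := h1
  cases t with
  | nil => simp at h2
  | cons a t => exact ⟨a, ⟨t, by simp⟩⟩

private lemma prefix_snoc {k l : List ℕ} {a : ℕ} (h1 : k <+: l ++ [a]) :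
    k <+: l ∨ k = l ++ [a] := by
  obtain ⟨t, ht⟩ := h1
  rcases List.eq_nil_or_concat t with rfl | ⟨t', b, rfl⟩
  · right; simpa using ht
  · left
    have h0 : (k ++ t') ++ [b] = l ++ [a] := by simpa using ht
    have h2 : k ++ t' = l := by
      have := congrArg List.dropLast h0
      simpa using this
    exact ⟨t', h2⟩

/-- Concatenation lemma, contrapositive form: a finite `h`-bushy tree above `σ`
has a leaf `τ` (extending `σ`) above which a given `h`-small set stays `h`-small. -/
theorem concatenation_contrapositive (h : ℕ → ℕ) (σ : List ℕ) (T : Set (List ℕ))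
    (hTfin : T.Finite) (hT : BushyAbove h σ T) (B : Set (List ℕ))
    (hB : SmallAbove h σ B) :
    ∃ τ : List ℕ, IsLeaf T τ ∧ σ <+: τ ∧ SmallAbove h τ B := by
  by_contra hcon
  push_neg at hcon
  obtain ⟨hTtree, hσT, hcomp, hbushy⟩ := hT
  -- every leaf of T extends σ
  have leafext : ∀ τ, IsLeaf T τ → σ <+: τ := by
    intro τ hτ
    rcases hcomp τ hτ.1 with hle | hle
    · rcases eq_or_ne τ σ with rfl | hne
      · exact List.prefix_refl _
      · obtain ⟨a, ha⟩ := exists_succ_prefix hle hne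
        exact absurd (hTtree σ hσT _ ha) (hτ.2 a)
    · exact hle
  -- leaves are maximal in T
  have leafmax : ∀ τ, IsLeaf T τ → ∀ ρ ∈ T, τ <+: ρ → τ = ρ := by
    intro τ hτ ρ hρ hle
    by_contra hne
    obtain ⟨a, ha⟩ := exists_succ_prefix hle hne
    exact hτ.2 a (hTtree ρ hρ _ ha)
  have big : ∀ τ, IsLeaf T τ → ∃ S : Set (List ℕ), S.Finite ∧ BushyAbove h τ S ∧
      ∀ ρ, IsLeaf S ρ → ρ ∈ B := by
    intro τ hτ
    have := hcon τ hτ (leafext τ hτ)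
    rw [SmallAbove, not_not] at this
    exact this
  choose! S hSfin hSbushy hSleaf using big
  set U : Set (List ℕ) := T ∪ ⋃ τ ∈ {τ | IsLeaf T τ}, S τ with hU
  have Tsub : T ⊆ U := Set.subset_union_left
  have Ssub : ∀ τ, IsLeaf T τ → S τ ⊆ U := by
    intro τ hτ x hx
    exact Or.inr (Set.mem_biUnion hτ hx)
  have memU : ∀ x ∈ U, x ∈ T ∨ ∃ τ, IsLeaf T τ ∧ x ∈ S τ := by
    intro x hx
    rcases hx with hx | hx
    · exact Or.inl hx
    · obtain ⟨τ, hτ, hxτ⟩ := Set.mem_iUnion₂.mp hx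
      exact Or.inr ⟨τ, hτ, hxτ⟩
  -- members of S τ not below τ and ≠ τ are not in T
  have notT : ∀ τ, IsLeaf T τ → ∀ ρ ∈ S τ, ρ ∉ T → τ <+: ρ ∧ ρ ≠ τ := by
    intro τ hτ ρ hρ hρT
    rcases (hSbushy τ hτ).2.2.1 ρ hρ with hle | hle
    · exact absurd (hTtree τ hτ.1 ρ hle) hρT
    · refine ⟨hle, ?_⟩
      rintro rfl
      exact hρT hτ.1
  -- key: leaves of component trees are leaves of U (when not in T or leaf of T case)
  have leafU : ∀ τ, IsLeaf T τ → ∀ ρ ∈ S τ, IsLeaf (S τ) ρ →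
      (ρ ∈ T → IsLeaf T ρ) → (∀ a, ρ ++ [a] ∉ U) := by
    intro τ hτ ρ hρ hρleafS hρT a haU
    rcases memU _ haU with haT | ⟨τ', hτ', haS⟩
    · -- ρ ++ [a] ∈ T, so ρ ∈ T and ρ is a leaf of T: contradiction
      have hρinT : ρ ∈ T := hTtree _ haT ρ ⟨[a], rfl⟩
      exact (hρT hρinT).2 a haT
    · rcases (hSbushy τ' hτ').2.2.1 _ haS with hle | hle
      · -- ρ ++ [a] <+: τ', so ρ is a strict prefix of τ' ∈ T
        have hρτ' : ρ <+: τ' := (List.prefix_append ρ [a]).trans hle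
        have hρinT : ρ ∈ T := hTtree τ' hτ'.1 ρ hρτ'
        have := leafmax ρ (hρT hρinT) τ' hτ'.1 hρτ'
        subst this
        have := hle.length_le
        simp at this
      · rcases prefix_snoc hle with hle' | rfl
        · -- τ' <+: ρ ; also from hρleafS and structure, τ and τ' are comparable prefixes of ρ
          -- show τ' = τ, then ρ ++ [a] ∈ S τ contradicts leaf of S τ
          have hττ' : τ = τ' := by
            rcases (hSbushy τ hτ).2.2.1 ρ hρ with h1 | h1
            · -- ρ <+: τ, so ρ ∈ T, leaf of T, and τ' <+: ρ ∈ T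
              have hρinT : ρ ∈ T := hTtree τ hτ.1 ρ h1
              have h2 := leafmax τ' hτ' ρ hρinT hle'
              have h3 : τ' <+: τ := h2 ▸ h1
              exact (leafmax τ' hτ' τ hτ.1 h3).symm
            · rcases List.prefix_or_prefix_of_prefix h1 hle' with h2 | h2
              · exact leafmax τ hτ τ' hτ'.1 h2
              · exact (leafmax τ' hτ' τ hτ.1 h2).symm
          subst hττ'
          exact hρleafS.2 a haS
        · -- τ' = ρ ++ [a] ∈ T, so ρ ∈ T, leaf of T, contradiction
          have hρinT : ρ ∈ T := hTtree _ hτ'.1 ρ ⟨[a], rfl⟩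
          exact (hρT hρinT).2 a hτ'.1
  -- now build the big tree witnessing BigAbove h σ B
  apply hB
  refine ⟨U, ?_, ⟨?_, Tsub hσT, ?_, ?_⟩, ?_⟩
  · -- finiteness
    refine hTfin.union (Set.Finite.biUnion (hTfin.subset fun τ hτ => hτ.1) ?_)
    intro τ hτ
    exact hSfin τ hτ
  · -- tree
    intro x hx ρ hρ
    rcases memU x hx with hxT | ⟨τ, hτ, hxS⟩
    · exact Tsub (hTtree x hxT ρ hρ)
    · exact Ssub τ hτ ((hSbushy τ hτ).1 x hxS ρ hρ)
  · -- comparability with σ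
    intro x hx
    rcases memU x hx with hxT | ⟨τ, hτ, hxS⟩
    · exact hcomp x hxT
    · rcases (hSbushy τ hτ).2.2.1 x hxS with hle | hle
      · exact List.prefix_or_prefix_of_prefix hle (leafext τ hτ)
      · exact Or.inr ((leafext τ hτ).trans hle)
  · -- bushiness
    intro ρ hρU hσρ hρnl
    by_cases hρT : ρ ∈ T
    · by_cases hρleafT : IsLeaf T ρ
      · -- ρ is a leaf of T; it is the root of S ρ
        have hρS : ρ ∈ S ρ := (hSbushy ρ hρleafT).2.1
        by_cases hρleafS : IsLeaf (S ρ) ρ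
        · exact absurd ⟨hρU, leafU ρ hρleafT ρ hρS hρleafS (fun _ => hρleafT)⟩ hρnl
        · have := (hSbushy ρ hρleafT).2.2.2 ρ hρS (List.prefix_refl ρ) hρleafS
          exact this.trans (Set.encard_mono fun a ha => Ssub ρ hρleafT ha)
      · have := hbushy ρ hρT hσρ hρleafT
        exact this.trans (Set.encard_mono fun a ha => Tsub ha)
    · obtain ⟨τ, hτ, hρS⟩ := (memU ρ hρU).resolve_left hρT
      obtain ⟨hτρ, hρneτ⟩ := notT τ hτ ρ hρS hρT
      by_cases hρleafS : IsLeaf (S τ) ρ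
      · exact absurd ⟨hρU, leafU τ hτ ρ hρS hρleafS (fun hin => absurd hin hρT)⟩ hρnl
      · have := (hSbushy τ hτ).2.2.2 ρ hρS hτρ hρleafS
        exact this.trans (Set.encard_mono fun a ha => Ssub τ hτ ha)
  · -- every leaf of U is in B
    intro ρ hρleafU
    rcases memU ρ hρleafU.1 with hρT | ⟨τ, hτ, hρS⟩
    · by_cases hρleafT : IsLeaf T ρ
      · have hρS : ρ ∈ S ρ := (hSbushy ρ hρleafT).2.1
        have : IsLeaf (S ρ) ρ := ⟨hρS, fun a ha => hρleafU.2 a (Ssub ρ hρleafT ha)⟩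
        exact hSleaf ρ hρleafT ρ this
      · -- ρ ∈ T not a leaf of T: has an extension in T ⊆ U, contradiction
        exfalso
        rw [IsLeaf, not_and_or] at hρleafT
        rcases hρleafT with h1 | h1
        · exact h1 hρT
        · push_neg at h1
          obtain ⟨a, ha⟩ := h1
          exact hρleafU.2 a (Tsub ha)
    · have : IsLeaf (S τ) ρ := ⟨hρS, fun a ha => hρleafU.2 a (Ssub τ hτ ha)⟩
      exact hSleaf τ hτ ρ this
end

section
/- Let h : ℕ → ℕ and let σ be a string. If a set of strings A is h-big above σ and a set of strings B is h-small above σ, then there exists a string τ ∈ A extending σ such that B is h-small above τ. -/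
/-- A proper prefix can be lengthened by one step while staying a prefix. -/
lemma exists_snoc_prefix {τ ρ : List ℕ} (hp : τ <+: ρ) (hne : τ ≠ ρ) :
    ∃ a, τ ++ [a] <+: ρ := by
  obtain ⟨rest, rfl⟩ := hp
  cases rest with
  | nil => simp at hne
  | cons b r => exact ⟨b, ⟨r, by simp⟩⟩

/-- In a tree, nothing properly extends a leaf. -/
lemma leaf_max {T : Set (List ℕ)} (hT : IsTree T) {τ ρ : List ℕ}
    (hl : IsLeaf T τ) (hp : τ <+: ρ) (hρ : ρ ∈ T) : ρ = τ := by
  by_contra hne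
  obtain ⟨a, ha⟩ := exists_snoc_prefix hp (Ne.symm hne)
  exact hl.2 a (hT ρ hρ _ ha)

/-- If `A` is `h`-big above `σ` and `B` is `h`-small above `σ`, then some `τ ∈ A`
extending `σ` is such that `B` is still `h`-small above `τ`. -/
theorem big_meets_small (h : ℕ → ℕ) (σ : List ℕ) (A B : Set (List ℕ))
    (hA : BigAbove h σ A) (hB : SmallAbove h σ B) :
    ∃ τ ∈ A, σ <+: τ ∧ SmallAbove h τ B := by
  classical
  obtain ⟨T, hTfin, ⟨hTtree, hσT, hTcomp, hTbushy⟩, hTleaves⟩ := hA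
  by_contra hcon
  push_neg at hcon
  -- every leaf of `T` extends `σ`
  have hleafext : ∀ τ, IsLeaf T τ → σ <+: τ := by
    intro τ hτ
    rcases hTcomp τ hτ.1 with hp | hp
    · rcases eq_or_ne τ σ with rfl | hne
      · exact List.prefix_rfl
      · obtain ⟨a, ha⟩ := exists_snoc_prefix hp hne
        exact absurd (hTtree σ hσT _ ha) (hτ.2 a)
    · exact hp
  -- `B` is big above every leaf of `T`
  have hbig : ∀ τ, IsLeaf T τ → BigAbove h τ B := by
    intro τ hτ
    have := hcon τ (hTleaves τ hτ) (hleafext τ hτ)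
    simpa [SmallAbove, not_not] using this
  choose S hS using hbig
  -- a non-dependent version of the chosen trees
  set S' : List ℕ → Set (List ℕ) :=
    fun τ => if hτ : IsLeaf T τ then S τ hτ else ∅ with hS'def
  have hS' : ∀ τ, IsLeaf T τ →
      (S' τ).Finite ∧ BushyAbove h τ (S' τ) ∧ ∀ ρ, IsLeaf (S' τ) ρ → ρ ∈ B := by
    intro τ hτ
    simp only [hS'def, dif_pos hτ]
    exact hS τ hτ
  set U : Set (List ℕ) := T ∪ ⋃ τ ∈ {τ | IsLeaf T τ}, S' τ with hUdef
  have hmemU : ∀ ρ, ρ ∈ U ↔ ρ ∈ T ∨ ∃ τ, IsLeaf T τ ∧ ρ ∈ S' τ := by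
    intro ρ
    simp [hUdef, Set.mem_iUnion]
  -- members of `S' τ` that are prefixes of `τ` lie in `T`
  have hpre : ∀ τ, IsLeaf T τ → ∀ ρ ∈ S' τ, τ <+: ρ ∨ (ρ ∈ T ∧ ρ <+: τ) := by
    intro τ hτ ρ hρ
    rcases (hS' τ hτ).2.1.2.2.1 ρ hρ with hp | hp
    · exact Or.inr ⟨hTtree τ hτ.1 ρ hp, hp⟩
    · exact Or.inl hp
  -- localization: proper extensions (in U) of a leaf τ lie in S' τ
  have hloc : ∀ τ, IsLeaf T τ → ∀ μ ∈ U, τ <+: μ → τ.length < μ.length → μ ∈ S' τ := by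
    intro τ hτ μ hμ hpμ hlen
    rcases (hmemU μ).1 hμ with hμT | ⟨τ', hτ', hμS⟩
    · have := leaf_max hTtree hτ hpμ hμT
      subst this; omega
    · rcases hpre τ' hτ' μ hμS with hp | ⟨hμT, hp⟩
      · -- τ' <+: μ, τ <+: μ, so τ and τ' comparable; both leaves ⇒ equal
        have hcomp := List.prefix_or_prefix_of_prefix hpμ hp
        have : τ' = τ := by
          rcases hcomp with hc | hc
          · exact (leaf_max hTtree hτ hc hτ'.1)
          · exact (leaf_max hTtree hτ' hc hτ.1).symm
        rwa [this] at hμS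
      · have := leaf_max hTtree hτ hpμ hμT
        subst this; omega
  refine hB ⟨U, ?_, ⟨?_, ?_, ?_, ?_⟩, ?_⟩
  · -- finiteness
    refine Set.Finite.union hTfin (Set.Finite.biUnion (hTfin.subset ?_) ?_)
    · intro τ hτ; exact hτ.1
    · intro τ hτ; exact (hS' τ hτ).1
  · -- tree
    intro ρ hρ μ hμ
    rcases (hmemU ρ).1 hρ with hρT | ⟨τ, hτ, hρS⟩
    · exact (hmemU μ).2 (Or.inl (hTtree ρ hρT μ hμ))
    · exact (hmemU μ).2 (Or.inr ⟨τ, hτ, (hS' τ hτ).2.1.1 ρ hρS μ hμ⟩)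
  · exact (hmemU σ).2 (Or.inl hσT)
  · -- comparability with σ
    intro ρ hρ
    rcases (hmemU ρ).1 hρ with hρT | ⟨τ, hτ, hρS⟩
    · exact hTcomp ρ hρT
    · rcases hpre τ hτ ρ hρS with hp | ⟨hρT, _⟩
      · exact Or.inr ((hleafext τ hτ).trans hp)
      · exact hTcomp ρ hρT
  · -- bushiness
    intro ρ hρ hσρ hnl
    -- it suffices to find a leaf τ with τ <+: ρ, ρ ∈ S' τ
    have key : ∀ τ, IsLeaf T τ → τ <+: ρ → ρ ∈ S' τ →
        (h ρ.length : ℕ∞) ≤ {a : ℕ | ρ ++ [a] ∈ U}.encard := by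
      intro τ hτ hpρ hρS
      have hsub : {a : ℕ | ρ ++ [a] ∈ S' τ} ⊆ {a : ℕ | ρ ++ [a] ∈ U} := by
        intro a ha
        exact (hmemU _).2 (Or.inr ⟨τ, hτ, ha⟩)
      have hnl' : ¬ IsLeaf (S' τ) ρ := by
        intro hl
        refine hnl ⟨hρ, fun a hUa => ?_⟩
        have : ρ ++ [a] ∈ S' τ :=
          hloc τ hτ _ hUa (hpρ.trans ⟨[a], rfl⟩) (by simpa using Nat.lt_succ_of_le hpρ.length_le)
        exact hl.2 a this
      calc (h ρ.length : ℕ∞) ≤ {a : ℕ | ρ ++ [a] ∈ S' τ}.encard :=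
            (hS' τ hτ).2.1.2.2.2 ρ hρS hpρ hnl'
        _ ≤ _ := Set.encard_le_encard hsub
    rcases (hmemU ρ).1 hρ with hρT | ⟨τ, hτ, hρS⟩
    · by_cases hl : IsLeaf T ρ
      · exact key ρ hl List.prefix_rfl (hS' ρ hl).2.1.2.1
      · have hsub : {a : ℕ | ρ ++ [a] ∈ T} ⊆ {a : ℕ | ρ ++ [a] ∈ U} := by
          intro a ha; exact (hmemU _).2 (Or.inl ha)
        exact le_trans (hTbushy ρ hρT hσρ hl) (Set.encard_le_encard hsub)
    · rcases hpre τ hτ ρ hρS with hp | ⟨hρT, hp⟩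
      · exact key τ hτ hp hρS
      · -- ρ <+: τ and ρ ∈ T; if ρ = τ use key, else ρ is not a leaf of T
        rcases eq_or_ne ρ τ with rfl | hne
        · exact key ρ hτ List.prefix_rfl hρS
        · have hl : ¬ IsLeaf T ρ := by
            intro hl
            exact hne (leaf_max hTtree hl hp hτ.1).symm
          have hsub : {a : ℕ | ρ ++ [a] ∈ T} ⊆ {a : ℕ | ρ ++ [a] ∈ U} := by
            intro a ha; exact (hmemU _).2 (Or.inl ha)
          exact le_trans (hTbushy ρ hρT hσρ hl) (Set.encard_le_encard hsub)
  · -- leaves of U lie in B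
    intro ρ hρ
    rcases (hmemU ρ).1 hρ.1 with hρT | ⟨τ, hτ, hρS⟩
    · -- ρ ∈ T; then ρ is a leaf of T, hence ρ ∈ S' ρ, reduce to next case
      have hl : IsLeaf T ρ := ⟨hρT, fun a ha => hρ.2 a ((hmemU _).2 (Or.inl ha))⟩
      refine (hS' ρ hl).2.2 ρ ⟨(hS' ρ hl).2.1.2.1, fun a ha => ?_⟩
      exact hρ.2 a ((hmemU _).2 (Or.inr ⟨ρ, hl, ha⟩))
    · refine (hS' τ hτ).2.2 ρ ⟨hρS, fun a ha => ?_⟩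
      exact hρ.2 a ((hmemU _).2 (Or.inr ⟨τ, hτ, ha⟩))
end

section
/- (Smallness additivity) Let n ≥ 1, let B_1, …, B_n be sets of strings, let g_1, …, g_n : ℕ → ℕ, and let σ be a string. If B_i is g_i-small above σ for every i ∈ {1, …, n}, then the union ⋃_{i=1}^{n} B_i is (∑_{i=1}^{n} g_i)-small above σ, where ∑_{i=1}^{n} g_i denotes the pointwise sum of the functions g_i. -/
/- helpers -/

lemma prefix_antisymm {l₁ l₂ : List ℕ} (h : l₁ <+: l₂) (h2 : l₂ <+: l₁) : l₁ = l₂ :=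
  h.eq_of_length (le_antisymm h.length_le h2.length_le)

lemma finite_prefixes (τ : List ℕ) : {ρ : List ℕ | ρ <+: τ}.Finite := by
  apply Set.Finite.subset ((Set.finite_Iic τ.length).image (fun k => τ.take k))
  intro ρ hρ
  exact ⟨ρ.length, hρ.length_le, ((List.prefix_iff_eq_take).mp hρ).symm⟩

/-- A proper prefix has an immediate extension that is still a prefix. -/
lemma exists_ext_prefix {ρ τ : List ℕ} (h : ρ <+: τ) (hlt : ρ.length < τ.length) :
    ∃ a : ℕ, ρ ++ [a] <+: τ := by
  refine ⟨τ.get ⟨ρ.length, hlt⟩, ?_⟩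
  have h1 : ρ = τ.take ρ.length := (List.prefix_iff_eq_take).mp h
  have h2 := List.take_concat_get hlt
  rw [List.concat_eq_append] at h2
  calc ρ ++ [τ.get ⟨ρ.length, hlt⟩] = τ.take (ρ.length + 1) := by rw [← h2, ← h1]; rfl
  _ <+: τ := List.take_prefix _ _

/-- If `τ ∈ B` then `B` is `g`-big above `τ` (one-point-above tree). -/
lemma big_of_mem (g : ℕ → ℕ) (τ : List ℕ) (B : Set (List ℕ)) (hτ : τ ∈ B) :
    BigAbove g τ B := by
  refine ⟨{ρ | ρ <+: τ}, finite_prefixes τ, ⟨?_, List.prefix_refl τ, ?_, ?_⟩, ?_⟩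
  · intro ρ hρ π hπ; exact hπ.trans hρ
  · intro ρ hρ; exact Or.inl hρ
  · intro ρ hρ hext hleaf
    exact absurd ⟨hρ, fun a ha => by
      have h3 : τ ++ [a] <+: τ := (prefix_antisymm hρ hext) ▸ ha
      simpa using h3.length_le⟩ hleaf
  · rintro ρ ⟨hρT, hρleaf⟩
    rcases lt_or_eq_of_le (hρT.length_le) with h | h
    · obtain ⟨a, ha⟩ := exists_ext_prefix hρT h
      exact absurd ha (hρleaf a)
    · rwa [hρT.eq_of_length h]

lemma uniq_branch {τ ρ : List ℕ} {a b : ℕ} (ha : τ ++ [a] <+: ρ) (hb : τ ++ [b] <+: ρ) :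
    a = b := by
  have h := List.prefix_or_prefix_of_prefix ha hb
  have : τ ++ [a] = τ ++ [b] := by
    rcases h with h | h
    · exact h.eq_of_length (by simp)
    · exact (h.eq_of_length (by simp)).symm
  simpa using this

lemma glue (g : ℕ → ℕ) (τ : List ℕ) (B : Set (List ℕ)) (S : Set ℕ)
    (hSne : S.Nonempty) (hScard : (g τ.length : ℕ∞) ≤ S.encard)
    (hbig : ∀ a ∈ S, BigAbove g (τ ++ [a]) B) : BigAbove g τ B := by
  obtain ⟨S', hS'sub, hS'card⟩ := Set.exists_subset_encard_eq
    (show ((max 1 (g τ.length) : ℕ) : ℕ∞) ≤ S.encard by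
      exact max_le (Set.one_le_encard_iff_nonempty.2 hSne) hScard)
  have hS'fin : S'.Finite := Set.finite_of_encard_eq_coe hS'card
  have hS'ne : S'.Nonempty := by
    rw [← Set.one_le_encard_iff_nonempty, hS'card]
    exact_mod_cast le_max_left 1 (g τ.length)
  have hS'ge : (g τ.length : ℕ∞) ≤ S'.encard := by
    rw [hS'card]; exact_mod_cast le_max_right 1 (g τ.length)
  choose T hTfin hTbushy hTleaf using fun (a : ℕ) (ha : a ∈ S') => hbig a (hS'sub ha)
  set TT : Set (List ℕ) := {ρ | ρ <+: τ} ∪ ⋃ (a : ℕ) (ha : a ∈ S'), T a ha with hTT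
  have hmemU : ∀ ρ : List ℕ, ρ ∈ TT ↔ ρ <+: τ ∨ ∃ a, ∃ ha : a ∈ S', ρ ∈ T a ha := by
    intro ρ; simp [hTT, Set.mem_iUnion]
  -- key: location of elements of each T a
  have key : ∀ a : ℕ, ∀ ha : a ∈ S', ∀ ρ ∈ T a ha, ρ <+: τ ∨ τ ++ [a] <+: ρ := by
    intro a ha ρ hρ
    rcases (hTbushy a ha).2.2.1 ρ hρ with h | h
    · by_cases hlen : ρ.length = τ.length + 1
      · right
        have : ρ = τ ++ [a] := h.eq_of_length (by simp [hlen])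
        rw [this]
      · left
        have hle : ρ.length ≤ τ.length := by
          have := h.length_le; simp at this; omega
        have h1 : ρ = (τ ++ [a]).take ρ.length := (List.prefix_iff_eq_take).mp h
        rw [List.take_append_of_le_length hle] at h1
        rw [h1]; exact List.take_prefix _ _
    · right; exact h
  have keymem : ∀ ρ ∈ TT, τ <+: ρ → ρ ≠ τ →
      ∃ a, ∃ ha : a ∈ S', ρ ∈ T a ha ∧ τ ++ [a] <+: ρ := by
    intro ρ hρ hext hne
    rcases (hmemU ρ).1 hρ with h | ⟨a, ha, hmem⟩
    · exact absurd (prefix_antisymm h hext) hne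
    · rcases key a ha ρ hmem with h | h
      · exact absurd (prefix_antisymm h hext) hne
      · exact ⟨a, ha, hmem, h⟩
  -- children of elements extending τ++[a] are exactly children in T a
  have childEq : ∀ a : ℕ, ∀ ha : a ∈ S', ∀ ρ : List ℕ, τ ++ [a] <+: ρ →
      ∀ c : ℕ, (ρ ++ [c] ∈ TT ↔ ρ ++ [c] ∈ T a ha) := by
    intro a ha ρ hρ c
    constructor
    · intro hc
      have hext : τ <+: ρ ++ [c] := ((τ.prefix_append [a]).trans hρ).trans (ρ.prefix_append [c])
      have hne : ρ ++ [c] ≠ τ := by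
        intro h
        have h1 : τ.length + 1 ≤ ρ.length := by simpa using hρ.length_le
        have : (ρ ++ [c]).length = τ.length := by rw [h]
        simp at this; omega
      obtain ⟨b, hb, hmem, hpre⟩ := keymem (ρ ++ [c]) hc hext hne
      have : a = b := uniq_branch (hρ.trans (ρ.prefix_append [c])) hpre
      subst this; exact hmem
    · intro hc
      exact (hmemU _).2 (Or.inr ⟨a, ha, hc⟩)
  refine ⟨TT, ?_, ⟨?_, (hmemU τ).2 (Or.inl (List.prefix_refl τ)), ?_, ?_⟩, ?_⟩
  · -- finite
    exact (finite_prefixes τ).union (Set.Finite.biUnion' hS'fin fun a ha => hTfin a ha)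
  · -- tree
    intro ρ hρ π hπ
    rcases (hmemU ρ).1 hρ with h | ⟨a, ha, hmem⟩
    · exact (hmemU π).2 (Or.inl (hπ.trans h))
    · exact (hmemU π).2 (Or.inr ⟨a, ha, (hTbushy a ha).1 ρ hmem π hπ⟩)
  · -- comparability
    intro ρ hρ
    rcases (hmemU ρ).1 hρ with h | ⟨a, ha, hmem⟩
    · exact Or.inl h
    · rcases key a ha ρ hmem with h | h
      · exact Or.inl h
      · exact Or.inr ((τ.prefix_append [a]).trans h)
  · -- bushiness
    intro ρ hρ hext hleaf
    by_cases hne : ρ = τ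
    · subst hne
      have hsub : S' ⊆ {c : ℕ | ρ ++ [c] ∈ TT} := by
        intro a ha
        exact (hmemU _).2 (Or.inr ⟨a, ha, (hTbushy a ha).2.1⟩)
      calc (g ρ.length : ℕ∞) ≤ S'.encard := hS'ge
      _ ≤ _ := Set.encard_mono hsub
    · obtain ⟨a, ha, hmem, hpre⟩ := keymem ρ hρ hext hne
      have hchild : {c : ℕ | ρ ++ [c] ∈ TT} = {c : ℕ | ρ ++ [c] ∈ T a ha} := by
        ext c; exact childEq a ha ρ hpre c
      have hnl : ¬ IsLeaf (T a ha) ρ := by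
        intro hl
        exact hleaf ⟨hρ, fun c hc => hl.2 c ((childEq a ha ρ hpre c).1 hc)⟩
      rw [hchild]
      exact (hTbushy a ha).2.2.2 ρ hmem hpre hnl
  · -- leaves in B
    rintro ρ ⟨hρ, hleaf⟩
    have hnotpre : ¬ ρ <+: τ := by
      intro h
      rcases lt_or_eq_of_le h.length_le with hlt | heq
      · obtain ⟨b, hb⟩ := exists_ext_prefix h hlt
        exact hleaf b ((hmemU _).2 (Or.inl hb))
      · obtain ⟨a0, ha0⟩ := hS'ne
        have : ρ = τ := h.eq_of_length heq
        subst this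
        exact hleaf a0 ((hmemU _).2 (Or.inr ⟨a0, ha0, (hTbushy a0 ha0).2.1⟩))
    rcases (hmemU ρ).1 hρ with h | ⟨a, ha, hmem⟩
    · exact absurd h hnotpre
    · rcases key a ha ρ hmem with h | hpre
      · exact absurd h hnotpre
      · exact hTleaf a ha ρ ⟨hmem, fun c hc => hleaf c ((childEq a ha ρ hpre c).2 hc)⟩

lemma bushy_small_empty (h : ℕ → ℕ) (σ : List ℕ) : ¬ BigAbove h σ (∅ : Set (List ℕ)) := by
  rintro ⟨T, hfin, ⟨htree, hmem, hcomp, hbushy⟩, hleaf⟩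
  have hEfin : {τ ∈ T | σ <+: τ}.Finite := hfin.subset (Set.sep_subset _ _)
  obtain ⟨τ, hτ, hmax⟩ := Set.Finite.exists_maximalFor List.length _ hEfin
    ⟨σ, hmem, List.prefix_refl σ⟩
  have : IsLeaf T τ := by
    refine ⟨hτ.1, fun a ha => ?_⟩
    have : (τ ++ [a]).length ≤ τ.length := hmax ⟨ha, hτ.2.trans (τ.prefix_append [a])⟩ (by simp)
    simp at this
  exact hleaf τ this

lemma big_split (g h : ℕ → ℕ) (σ : List ℕ) (B C : Set (List ℕ))
    (hbig : BigAbove (fun k => g k + h k) σ (B ∪ C)) :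
    BigAbove g σ B ∨ BigAbove h σ C := by
  obtain ⟨T, hfin, ⟨htree, hmem, hcomp, hbushy⟩, hleaf⟩ := hbig
  set N : ℕ := (hfin.toFinset).sup List.length with hN
  have hbound : ∀ τ ∈ T, τ.length ≤ N := by
    intro τ hτ
    exact Finset.le_sup (hfin.mem_toFinset.2 hτ)
  -- main downward induction
  have claim : ∀ m : ℕ, ∀ τ ∈ T, σ <+: τ → N + 1 - τ.length ≤ m →
      BigAbove g τ B ∨ BigAbove h τ C := by
    intro m
    induction m with
    | zero =>
      intro τ hτ _ hm
      have := hbound τ hτ; omega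
    | succ m ih =>
      intro τ hτ hext hm
      by_cases hl : IsLeaf T τ
      · rcases hleaf τ hl with hB | hC
        · exact Or.inl (big_of_mem g τ B hB)
        · exact Or.inr (big_of_mem h τ C hC)
      · -- non-leaf: pigeonhole among children
        have hτN : τ.length ≤ N := hbound τ hτ
        have hchild : ∀ a : ℕ, τ ++ [a] ∈ T →
            BigAbove g (τ ++ [a]) B ∨ BigAbove h (τ ++ [a]) C := by
          intro a ha
          refine ih (τ ++ [a]) ha (hext.trans (τ.prefix_append [a])) ?_
          rw [List.length_append, List.length_singleton]
          omega
        set A : Set ℕ := {a : ℕ | τ ++ [a] ∈ T} with hA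
        have hAne : A.Nonempty := by
          rw [IsLeaf, not_and] at hl
          push_neg at hl
          obtain ⟨a, ha⟩ := hl hτ
          exact ⟨a, ha⟩
        have hAcard : ((g τ.length + h τ.length : ℕ) : ℕ∞) ≤ A.encard :=
          hbushy τ hτ hext hl
        set AB : Set ℕ := {a ∈ A | BigAbove g (τ ++ [a]) B} with hAB
        have hAC : ∀ a ∈ A \ AB, BigAbove h (τ ++ [a]) C := by
          rintro a ⟨haA, haB⟩
          rcases hchild a haA with hb | hb
          · exact absurd ⟨haA, hb⟩ haB
          · exact hb
        by_cases hc1 : (g τ.length : ℕ∞) ≤ AB.encard ∧ AB.Nonempty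
        · left
          exact glue g τ B AB hc1.2 hc1.1 (fun a ha => ha.2)
        · right
          rw [not_and_or] at hc1
          have hsplit : (A \ AB).encard + AB.encard = A.encard :=
            Set.encard_diff_add_encard_of_subset (Set.sep_subset _ _)
          have hgoal : (h τ.length : ℕ∞) ≤ (A \ AB).encard ∧ (A \ AB).Nonempty := by
            rcases hc1 with hc | hc
            · -- AB.encard < g
              push_neg at hc
              have hg1 : 1 ≤ g τ.length := by
                rcases Nat.eq_zero_or_pos (g τ.length) with h0 | h0
                · rw [h0] at hc; exact absurd hc (by simp)
                · exact h0
              have hcast : ((g τ.length - 1 : ℕ) : ℕ∞) + 1 = (g τ.length : ℕ∞) := by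
                norm_cast; omega
              have hABle : AB.encard ≤ ((g τ.length - 1 : ℕ) : ℕ∞) :=
                Order.le_of_lt_add_one (hcast ▸ hc)
              have h1 : ((g τ.length - 1 : ℕ) : ℕ∞) + ((h τ.length + 1 : ℕ) : ℕ∞)
                  ≤ ((g τ.length - 1 : ℕ) : ℕ∞) + (A \ AB).encard := by
                calc ((g τ.length - 1 : ℕ) : ℕ∞) + ((h τ.length + 1 : ℕ) : ℕ∞)
                    = ((g τ.length + h τ.length : ℕ) : ℕ∞) := by
                      norm_cast; omega
                  _ ≤ A.encard := hAcard
                  _ = (A \ AB).encard + AB.encard := hsplit.symm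
                  _ ≤ (A \ AB).encard + ((g τ.length - 1 : ℕ) : ℕ∞) := by
                      gcongr
                  _ = ((g τ.length - 1 : ℕ) : ℕ∞) + (A \ AB).encard := by ring
              have h2 : ((h τ.length + 1 : ℕ) : ℕ∞) ≤ (A \ AB).encard :=
                (WithTop.add_le_add_iff_left (ENat.coe_ne_top _)).1 h1
              constructor
              · refine le_trans ?_ h2; exact_mod_cast Nat.le_succ _
              · rw [← Set.one_le_encard_iff_nonempty]
                refine le_trans ?_ h2; exact_mod_cast Nat.one_le_iff_ne_zero.2 (by omega)
            · -- AB empty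
              rw [Set.not_nonempty_iff_eq_empty] at hc
              rw [hc, Set.diff_empty]
              constructor
              · refine le_trans ?_ hAcard; exact_mod_cast Nat.le_add_left _ _
              · exact hAne
          exact glue h τ C (A \ AB) hgoal.2 hgoal.1 hAC
  rcases claim (N + 1) σ hmem (List.prefix_refl σ) (by omega) with hB | hC
  · exact Or.inl hB
  · exact Or.inr hC

lemma big_iUnion : ∀ (n : ℕ) (B : Fin n → Set (List ℕ)) (g : Fin n → ℕ → ℕ) (σ : List ℕ),
    BigAbove (fun k => ∑ i : Fin n, g i k) σ (⋃ i : Fin n, B i) →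
    ∃ i : Fin n, BigAbove (g i) σ (B i) := by
  intro n
  induction n with
  | zero =>
    intro B g σ h
    rw [Set.iUnion_of_empty] at h
    exact absurd h (bushy_small_empty _ σ)
  | succ n ih =>
    intro B g σ h
    have hU : (⋃ i : Fin (n+1), B i) = B 0 ∪ ⋃ i : Fin n, B i.succ := by
      ext x
      simp only [Set.mem_iUnion, Set.mem_union, Fin.exists_fin_succ]
    have hf : (fun k => ∑ i : Fin (n+1), g i k) = (fun k => g 0 k + ∑ i : Fin n, g i.succ k) := by
      funext k; rw [Fin.sum_univ_succ]
    rw [hU, hf] at h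
    rcases big_split _ _ σ _ _ h with h | h
    · exact ⟨0, h⟩
    · obtain ⟨i, hi⟩ := ih (fun i => B i.succ) (fun i => g i.succ) σ h
      exact ⟨i.succ, hi⟩


/-- Smallness additivity: if `B i` is `g i`-small above `σ` for each `i`, then
`⋃ i, B i` is `(∑ i, g i)`-small above `σ` (pointwise sum). -/
theorem smallness_additivity (n : ℕ) (hn : 1 ≤ n) (B : Fin n → Set (List ℕ))
    (g : Fin n → ℕ → ℕ) (σ : List ℕ)
    (hsmall : ∀ i : Fin n, SmallAbove (g i) σ (B i)) :
    SmallAbove (fun k => ∑ i : Fin n, g i k) σ (⋃ i : Fin n, B i) := by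
  intro hbig
  obtain ⟨i, hi⟩ := big_iUnion n B g σ hbig
  exact hsmall i hi
end

section
/- (Small set closure) Let g : ℕ → ℕ, let σ be a string, and let B be a set of strings. Define the g-closure of B as C = {τ : B is g-big above τ}. If B is g-small above σ, then C is g-small above σ. -/
lemma exists_concat_prefix {τ σ : List ℕ} (h : τ <+: σ) (hne : τ ≠ σ) :
    ∃ a, τ ++ [a] <+: σ := by
  obtain ⟨ρ, rfl⟩ := h
  cases ρ with
  | nil => simp at hne
  | cons a ρ => exact ⟨a, ρ, by simp⟩

lemma leaf_ext {T : Set (List ℕ)} (hT : IsTree T) {τ ρ : List ℕ}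
    (hleaf : IsLeaf T τ) (hρ : ρ ∈ T) (h : τ <+: ρ) : ρ = τ := by
  by_contra hne
  obtain ⟨a, ha⟩ := exists_concat_prefix h (Ne.symm hne)
  exact hleaf.2 a (hT ρ hρ _ ha)

/-- Small set closure: if `B` is `g`-small above `σ`, then its `g`-closure
`{τ | B is g-big above τ}` is also `g`-small above `σ`. -/
theorem small_set_closure (g : ℕ → ℕ) (σ : List ℕ) (B : Set (List ℕ))
    (hB : SmallAbove g σ B) :
    SmallAbove g σ {τ : List ℕ | BigAbove g τ B} := by
  intro hC
  apply hB
  obtain ⟨T, hTfin, ⟨hTree, hσT, hcomp, hbushy⟩, hleaves⟩ := hC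
  have hch : ∀ τ, IsLeaf T τ → ∃ S : Set (List ℕ),
      S.Finite ∧ BushyAbove g τ S ∧ ∀ ρ, IsLeaf S ρ → ρ ∈ B := fun τ h => hleaves τ h
  choose! S hSfin hSbushy hSleaves using hch
  -- the set of leaves of T
  set L : Set (List ℕ) := {τ | IsLeaf T τ} with hL
  have hLsub : L ⊆ T := fun τ hτ => hτ.1
  set U : Set (List ℕ) := T ∪ ⋃ τ ∈ L, S τ with hU
  have hTU : T ⊆ U := Set.subset_union_left
  have hSU : ∀ τ ∈ L, S τ ⊆ U := fun τ hτ =>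
    le_trans (Set.subset_biUnion_of_mem hτ) Set.subset_union_right
  have hmemU : ∀ ρ, ρ ∈ U ↔ ρ ∈ T ∨ ∃ τ ∈ L, ρ ∈ S τ := by
    intro ρ; simp [hU]
  -- leaves of T extend σ
  have hLext : ∀ τ ∈ L, σ <+: τ := by
    intro τ hτ
    rcases hcomp τ hτ.1 with h | h
    · rw [leaf_ext hTree hτ hσT h]
    · exact h
  -- comparable leaves of T are equal
  have hLeq : ∀ τ ∈ L, ∀ τ' ∈ L, τ <+: τ' → τ = τ' := by
    intro τ hτ τ' hτ' h
    exact (leaf_ext hTree hτ (hLsub hτ') h).symm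
  -- a strict prefix of a leaf which is in T is not a leaf of T
  have hstrict : ∀ τ ∈ L, ∀ ρ : List ℕ, ρ <+: τ → ρ ≠ τ → ρ ∈ T ∧ ¬ IsLeaf T ρ := by
    intro τ hτ ρ h hne
    refine ⟨hTree τ (hLsub hτ) ρ h, fun hl => ?_⟩
    obtain ⟨a, ha⟩ := exists_concat_prefix h hne
    exact hl.2 a (hTree τ (hLsub hτ) _ ha)
  -- leaf preservation
  have hpres : ∀ τ ∈ L, ∀ ρ, ρ ∈ S τ → τ <+: ρ → IsLeaf (S τ) ρ → IsLeaf U ρ := by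
    intro τ hτ ρ hρ hτρ hlf
    refine ⟨hSU τ hτ hρ, fun a ha => ?_⟩
    rcases (hmemU _).1 ha with h | ⟨τ', hτ', h⟩
    · have hρT : ρ ∈ T := hTree _ h ρ ⟨[a], rfl⟩
      have : ρ = τ := leaf_ext hTree hτ hρT hτρ
      subst this
      exact hτ.2 a h
    · obtain ⟨hTree', _, hcomp', _⟩ := hSbushy τ' hτ'
      have hττ' : τ = τ' := by
        rcases hcomp' _ h with h' | h'
        · exact hLeq τ hτ τ' hτ'
            (hτρ.trans ((List.prefix_append ρ [a]).trans h'))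
        · rcases List.prefix_or_prefix_of_prefix h'
            (hτρ.trans (List.prefix_append ρ [a])) with h'' | h''
          · exact (hLeq τ' hτ' τ hτ h'').symm
          · exact hLeq τ hτ τ' hτ' h''
      subst hττ'
      exact hlf.2 a h
  refine ⟨U, ?_, ⟨?_, hTU hσT, ?_, ?_⟩, ?_⟩
  · exact hTfin.union (Set.Finite.biUnion (hTfin.subset hLsub) (fun τ hτ => hSfin τ hτ))
  · -- tree
    intro ρ hρ π hπ
    rcases (hmemU _).1 hρ with h | ⟨τ, hτ, h⟩
    · exact hTU (hTree ρ h π hπ)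
    · exact hSU τ hτ ((hSbushy τ hτ).1 ρ h π hπ)
  · -- comparability with σ
    intro ρ hρ
    rcases (hmemU _).1 hρ with h | ⟨τ, hτ, h⟩
    · exact hcomp ρ h
    · obtain ⟨_, _, hcomp', _⟩ := hSbushy τ hτ
      rcases hcomp' ρ h with h' | h'
      · exact List.prefix_or_prefix_of_prefix h' (hLext τ hτ)
      · exact Or.inr ((hLext τ hτ).trans h')
  · -- bushiness
    intro ρ hρ hσρ hnl
    have key : ∀ τ ∈ L, ρ ∈ S τ → τ <+: ρ →
        (g ρ.length : ℕ∞) ≤ {a : ℕ | ρ ++ [a] ∈ U}.encard := by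
      intro τ hτ hρS hτρ
      obtain ⟨_, _, _, hbushy'⟩ := hSbushy τ hτ
      have hnlS : ¬ IsLeaf (S τ) ρ := fun hlf => hnl (hpres τ hτ ρ hρS hτρ hlf)
      exact le_trans (hbushy' ρ hρS hτρ hnlS)
        (Set.encard_mono (fun a ha => hSU τ hτ ha))
    by_cases hρT : ρ ∈ T
    · by_cases hlf : IsLeaf T ρ
      · exact key ρ hlf (hSbushy ρ hlf).2.1 (List.prefix_refl ρ)
      · exact le_trans (hbushy ρ hρT hσρ hlf) (Set.encard_mono (fun a ha => hTU ha))
    · rcases (hmemU _).1 hρ with h | ⟨τ, hτ, h⟩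
      · exact absurd h hρT
      · obtain ⟨_, _, hcomp', _⟩ := hSbushy τ hτ
        rcases hcomp' ρ h with h' | h'
        · exact absurd (hTree τ (hLsub hτ) ρ h') hρT
        · exact key τ hτ h h'
  · -- leaves in B
    intro ρ hρ
    have hρU := hρ.1
    have hlfsub : ∀ τ ∈ L, ρ ∈ S τ → ρ ∈ B := by
      intro τ hτ h
      exact hSleaves τ hτ ρ ⟨h, fun a ha => hρ.2 a (hSU τ hτ ha)⟩
    rcases (hmemU _).1 hρU with h | ⟨τ, hτ, h⟩
    · have hlf : IsLeaf T ρ := ⟨h, fun a ha => hρ.2 a (hTU ha)⟩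
      exact hlfsub ρ hlf (hSbushy ρ hlf).2.1
    · exact hlfsub τ hτ h
end

section
/- (Survival of smallness at one step) Let g, h : ℕ → ℕ with g(n) ≤ h(n) for all n, let T be a tree that is h-bushy above the empty string, let B be a set of strings, and let ρ ∈ T be a non-leaf of T with |ρ| = n. If B is g-small above ρ, then there are at least h(n) − g(n) distinct immediate extensions τ of ρ with τ ∈ T such that B is g-small above τ. -/
/-- Auxiliary: merging big trees above children shows bigness above the parent. -/
lemma big_of_big_children (g : ℕ → ℕ) (B : Set (List ℕ)) (ρ : List ℕ) (F : Finset ℕ)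
    (hF : F.Nonempty) (hcard : g ρ.length ≤ F.card)
    (hbig : ∀ a ∈ F, BigAbove g (ρ ++ [a]) B) : BigAbove g ρ B := by
  classical
  choose Ta hfin hbushy hleaf using hbig
  set T' : Set (List ℕ) := {τ | τ <+: ρ} ∪ ⋃ (a : ℕ) (ha : a ∈ F), Ta a ha with hT'
  -- basic facts
  have hTa_sub : ∀ a (ha : a ∈ F), Ta a ha ⊆ T' := by
    intro a ha τ hτ
    exact Or.inr (Set.mem_iUnion.2 ⟨a, Set.mem_iUnion.2 ⟨ha, hτ⟩⟩)
  have hchild_mem : ∀ a (ha : a ∈ F), ρ ++ [a] ∈ Ta a ha := fun a ha => (hbushy a ha).2.1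
  -- membership characterization
  have hmem : ∀ τ ∈ T', τ <+: ρ ∨ ∃ a, ∃ ha : a ∈ F, τ ∈ Ta a ha := by
    intro τ hτ
    rcases hτ with hτ | hτ
    · exact Or.inl hτ
    · simp only [Set.mem_iUnion] at hτ
      exact Or.inr hτ
  -- any member of Ta comparable with ρ ++ [a]
  have hcompat : ∀ a (ha : a ∈ F), ∀ τ ∈ Ta a ha, τ <+: ρ ∨ ρ ++ [a] <+: τ := by
    intro a ha τ hτ
    rcases (hbushy a ha).2.2.1 τ hτ with hp | hp
    · by_cases hlen : τ.length ≤ ρ.length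
      · exact Or.inl (List.prefix_of_prefix_length_le hp (by simp) hlen)
      · right
        have : τ.length = (ρ ++ [a]).length := by
          have := hp.length_le
          simp only [List.length_append, List.length_singleton] at this ⊢
          omega
        rw [hp.eq_of_length this]
    · exact Or.inr hp
  -- if a strict extension of ρ is in Ta a, then it extends ρ ++ [a]
  have hext : ∀ a (ha : a ∈ F), ∀ τ ∈ Ta a ha, ρ.length < τ.length → ρ ++ [a] <+: τ := by
    intro a ha τ hτ hlen
    rcases hcompat a ha τ hτ with hp | hp
    · exact absurd hp.length_le (by omega)
    · exact hp
  -- two children prefixes agree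
  have huniq : ∀ a b : ℕ, ∀ τ : List ℕ, ρ ++ [a] <+: τ → ρ ++ [b] <+: τ → a = b := by
    intro a b τ h1 h2
    have := (List.prefix_of_prefix_length_le h1 h2 (by simp)).eq_of_length (by simp)
    simpa using List.append_cancel_left this
  -- proper prefixes of ρ are not leaves of T'
  have hprefix_notleaf : ∀ τ, τ <+: ρ → ¬ IsLeaf T' τ := by
    intro τ hτ hleaf'
    rcases hτ with ⟨s, rfl⟩
    cases s with
    | nil =>
        obtain ⟨a, ha⟩ := hF
        exact hleaf'.2 a (hTa_sub a ha (by simpa using hchild_mem a ha))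
    | cons c s' =>
        exact hleaf'.2 c (Or.inl ⟨s', by simp⟩)
  -- T' is finite
  have hfin' : T'.Finite := by
    apply Set.Finite.union
    · apply Set.Finite.subset (Set.finite_range fun k : Fin (ρ.length + 1) => ρ.take k)
      intro τ hτ
      refine ⟨⟨τ.length, by have := hτ.length_le; omega⟩, ?_⟩
      simpa using (List.prefix_iff_eq_take.1 hτ).symm
    · exact Set.Finite.biUnion' F.finite_toSet fun a ha => hfin a ha
  refine ⟨T', hfin', ⟨?_, Or.inl (List.prefix_refl ρ), ?_, ?_⟩, ?_⟩
  · -- IsTree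
    intro σ hσ τ hτ
    rcases hmem σ hσ with hp | ⟨a, ha, hσa⟩
    · exact Or.inl (hτ.trans hp)
    · exact hTa_sub a ha ((hbushy a ha).1 σ hσa τ hτ)
  · -- comparability with ρ
    intro τ hτ
    rcases hmem τ hτ with hp | ⟨a, ha, hτa⟩
    · exact Or.inl hp
    · rcases hcompat a ha τ hτa with hp | hp
      · exact Or.inl hp
      · exact Or.inr (((ρ.prefix_append [a])).trans hp)
  · -- bushiness
    intro τ hτ hρτ hnl
    by_cases hτρ : τ = ρ
    · subst hτρ
      calc (g τ.length : ℕ∞) ≤ (F.card : ℕ∞) := by exact_mod_cast hcard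
        _ = (↑F : Set ℕ).encard := (Set.encard_coe_eq_coe_finsetCard F).symm
        _ ≤ _ := Set.encard_mono (fun a ha =>
            hTa_sub a ha (hchild_mem a ha))
    · -- τ strictly extends ρ, lies in some Ta a, and extends ρ ++ [a]
      have hlt : ρ.length < τ.length := by
        rcases lt_or_eq_of_le hρτ.length_le with h | h
        · exact h
        · exact absurd (hρτ.eq_of_length h).symm hτρ
      rcases hmem τ hτ with hp | ⟨a, ha, hτa⟩
      · exact absurd hp.length_le (by omega)
      have hρa : ρ ++ [a] <+: τ := hext a ha τ hτa hlt
      -- τ is not a leaf of Ta a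
      have hnl' : ¬ IsLeaf (Ta a ha) τ := by
        intro hleaf'
        apply hnl
        refine ⟨hτ, fun c hc => ?_⟩
        rcases hmem _ hc with hp | ⟨b, hb, hcb⟩
        · have := hp.length_le; simp at this; omega
        · have hρb : ρ ++ [b] <+: τ ++ [c] := hext b hb _ hcb (by simp; omega)
          have : a = b := huniq a b (τ ++ [c]) (hρa.trans (τ.prefix_append [c])) hρb
          subst this
          exact hleaf'.2 c (by convert hcb)
      calc (g τ.length : ℕ∞) ≤ {c : ℕ | τ ++ [c] ∈ Ta a ha}.encard :=
            (hbushy a ha).2.2.2 τ hτa hρa hnl'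
        _ ≤ _ := Set.encard_mono (fun c hc => hTa_sub a ha hc)
  · -- leaves are in B
    intro τ hleaf'
    rcases hmem τ hleaf'.1 with hp | ⟨a, ha, hτa⟩
    · exact absurd hleaf' (hprefix_notleaf τ hp)
    · refine hleaf a ha τ ⟨hτa, fun c hc => hleaf'.2 c (hTa_sub a ha hc)⟩

/-- Survival of smallness at one step: in an `h`-bushy tree above the empty string,
if `B` is `g`-small above a non-leaf `ρ ∈ T`, then `B` stays `g`-small above at least
`h |ρ| - g |ρ|` many immediate extensions of `ρ` lying in `T`. -/
theorem smallness_survives_one_step (g h : ℕ → ℕ) (hgh : ∀ n, g n ≤ h n)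
    (T : Set (List ℕ)) (hT : BushyAbove h [] T) (B : Set (List ℕ)) (ρ : List ℕ)
    (hρ : ρ ∈ T) (hnotleaf : ¬ IsLeaf T ρ) (hsmall : SmallAbove g ρ B) :
    ((h ρ.length - g ρ.length : ℕ) : ℕ∞) ≤
      {a : ℕ | ρ ++ [a] ∈ T ∧ SmallAbove g (ρ ++ [a]) B}.encard := by
  classical
  set n := ρ.length
  set bad : Set ℕ := {a | ρ ++ [a] ∈ T ∧ BigAbove g (ρ ++ [a]) B} with hbad_def
  set good : Set ℕ := {a : ℕ | ρ ++ [a] ∈ T ∧ SmallAbove g (ρ ++ [a]) B} with hgood_def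
  set A : Set ℕ := {a | ρ ++ [a] ∈ T} with hA_def
  have hA : (h n : ℕ∞) ≤ A.encard := hT.2.2.2 ρ hρ List.nil_prefix hnotleaf
  -- bad is small
  have hbad : bad.encard ≤ (g n : ℕ∞) := by
    by_contra hc
    push_neg at hc
    have hmax : ((max (g n) 1 : ℕ) : ℕ∞) ≤ bad.encard := by
      have h1 : (g n : ℕ∞) + 1 ≤ bad.encard := Order.add_one_le_of_lt hc
      calc ((max (g n) 1 : ℕ) : ℕ∞) ≤ (g n : ℕ∞) + 1 := by
            exact_mod_cast Nat.max_le.2 ⟨Nat.le_succ _, Nat.one_le_iff_ne_zero.2 (Nat.succ_ne_zero _)⟩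
        _ ≤ bad.encard := h1
    obtain ⟨s, hs_sub, hs_card⟩ := Set.exists_subset_encard_eq hmax
    have hs_fin : s.Finite := Set.finite_of_encard_eq_coe hs_card
    have hcard' : hs_fin.toFinset.card = max (g n) 1 := by
      have := hs_fin.encard_eq_coe_toFinset_card
      rw [this] at hs_card
      exact_mod_cast hs_card
    apply hsmall
    apply big_of_big_children g B ρ hs_fin.toFinset
    · rw [← Finset.card_pos, hcard']; omega
    · rw [hcard']; exact le_max_left _ _
    · intro a ha'
      exact (hs_sub (hs_fin.mem_toFinset.1 ha')).2
  have hsplit : A ⊆ good ∪ bad := by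
    intro a ha
    by_cases hb : BigAbove g (ρ ++ [a]) B
    · exact Or.inr ⟨ha, hb⟩
    · exact Or.inl ⟨ha, hb⟩
  rw [ENat.coe_sub, tsub_le_iff_right]
  calc (h n : ℕ∞) ≤ A.encard := hA
    _ ≤ (good ∪ bad).encard := Set.encard_mono hsplit
    _ ≤ good.encard + bad.encard := Set.encard_union_le _ _
    _ ≤ good.encard + (g n : ℕ∞) := add_le_add_right hbad _
end

section
/- (Avoidance sets are small) Let c : ℕ and let A : ℕ → Finset ℕ be a family of finite sets of natural numbers with (A n).card ≤ c for every n. Then the set B = {σ : ∃ n < |σ|, σ(n) ∈ A n} of strings is (c+1)-small above the empty string, where c+1 denotes the constant function n ↦ c+1. -/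
/-- Avoidance sets are small: if each `A n` has at most `c` elements, then the set of
strings `σ` with `σ(n) ∈ A n` for some `n < |σ|` is `(c+1)`-small above the empty string. -/
theorem avoidance_sets_small (c : ℕ) (A : ℕ → Finset ℕ) (hA : ∀ n, (A n).card ≤ c) :
    SmallAbove (fun _ => c + 1) []
      {σ : List ℕ | ∃ n : ℕ, ∃ hn : n < σ.length, σ.get ⟨n, hn⟩ ∈ A n} := by
  rintro ⟨T, hTfin, ⟨hTree, hmem, hcomp, hbushy⟩, hleaf⟩
  set S : Set (List ℕ) :=
    {τ | τ ∈ T ∧ ∀ n (hn : n < τ.length), τ.get ⟨n, hn⟩ ∉ A n} with hS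
  have hSfin : S.Finite := hTfin.subset (fun τ hτ => hτ.1)
  have hSne : S.Nonempty := ⟨[], hmem, by intro n hn; simp at hn⟩
  obtain ⟨τ, hτS, hmax⟩ := Set.Finite.exists_maximalFor List.length _ hSfin hSne
  by_cases hlf : IsLeaf T τ
  · obtain ⟨n, hn, hmemA⟩ := hleaf τ hlf
    exact hτS.2 n hn hmemA
  · have h1 := hbushy τ hτS.1 List.nil_prefix hlf
    have hnot : ¬ {a | τ ++ [a] ∈ T} ⊆ (A τ.length : Set ℕ) := by
      intro hsub
      have h2 : {a | τ ++ [a] ∈ T}.encard ≤ (A τ.length : Set ℕ).encard :=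
        Set.encard_mono hsub
      rw [Set.encard_coe_eq_coe_finsetCard] at h2
      have h3 : ((c + 1 : ℕ) : ℕ∞) ≤ (c : ℕ∞) := by
        calc ((c + 1 : ℕ) : ℕ∞) ≤ _ := h1
        _ ≤ ((A τ.length).card : ℕ∞) := h2
        _ ≤ (c : ℕ∞) := by exact_mod_cast hA τ.length
      exact absurd (Nat.cast_le.mp h3) (by omega)
    obtain ⟨a, haT, haA⟩ := Set.not_subset.mp hnot
    have hnew : τ ++ [a] ∈ S := by
      refine ⟨haT, fun n hn => ?_⟩
      rcases Nat.lt_or_ge n τ.length with h | h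
      · have : (τ ++ [a]).get ⟨n, hn⟩ = τ.get ⟨n, h⟩ := by
          simp [List.get_eq_getElem, List.getElem_append_left h]
        rw [this]; exact hτS.2 n h
      · have hne : n = τ.length := by
          simp at hn; omega
        subst hne
        have : (τ ++ [a]).get ⟨τ.length, hn⟩ = a := by
          simp
        rw [this]; exact haA
    have := hmax hnew (by simp)
    simp at this
end

section
/- The set B_DNC = {σ : ∃ e < |σ|, φ_e(e) converges and σ(e) = φ_e(e)} of strings is 2-small above the empty string, where 2 denotes the constant function n ↦ 2. -/
/-- The set `B_DNC` of strings that are not initial segments of any DNC function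
is 2-small above the empty string. -/
theorem BDNC_small :
    SmallAbove (fun _ => 2) []
      {σ : List ℕ | ∃ e : ℕ, ∃ he : e < σ.length,
        σ.get ⟨e, he⟩ ∈ (Denumerable.ofNat Nat.Partrec.Code e).eval e} := by
  rintro ⟨T, hfin, ⟨htree, hmem, hcomp, hbushy⟩, hleaf⟩
  -- invariant: τ ∈ T and τ avoids all diagonal values
  set P : List ℕ → Prop := fun τ => τ ∈ T ∧
    ∀ e : ℕ, ∀ he : e < τ.length,
      τ.get ⟨e, he⟩ ∉ (Denumerable.ofNat Nat.Partrec.Code e).eval e with hP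
  have hS : {τ | P τ}.Finite := hfin.subset (fun τ hτ => hτ.1)
  have hne : {τ | P τ}.Nonempty := ⟨[], hmem, fun e he => by simp at he⟩
  obtain ⟨τ, hτ, hmax⟩ := hS.exists_maximalFor List.length _ hne
  -- τ must be a leaf, otherwise we can extend it
  by_cases hl : IsLeaf T τ
  · -- leaf is in B_DNC, contradiction with invariant
    obtain ⟨e, he, hval⟩ := hleaf τ hl
    exact hτ.2 e he hval
  · have hb := hbushy τ hτ.1 τ.nil_prefix hl
    -- find a child avoiding the diagonal value
    set p := (Denumerable.ofNat Nat.Partrec.Code τ.length).eval τ.length with hp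
    have : ∃ a : ℕ, τ ++ [a] ∈ T ∧ a ∉ p := by
      by_contra h
      push_neg at h
      have hsub : {a : ℕ | τ ++ [a] ∈ T} ⊆ {a : ℕ | a ∈ p} := fun a ha => h a ha
      have h1 : {a : ℕ | a ∈ p}.encard ≤ 1 := by
        rw [Set.encard_le_one_iff]
        exact fun a b ha hb => Part.mem_unique ha hb
      have h2 := le_trans hb (le_trans (Set.encard_mono hsub) h1)
      norm_num at h2
    obtain ⟨a, haT, hap⟩ := this
    have hPa : P (τ ++ [a]) := by
      refine ⟨haT, fun e he' hval => ?_⟩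
      rcases lt_or_eq_of_le (Nat.lt_succ_iff.mp (by simpa using he')) with h | h
      · apply hτ.2 e h
        have : (τ ++ [a]).get ⟨e, he'⟩ = τ.get ⟨e, h⟩ := by
          exact List.getElem_append_left h
        rwa [this] at hval
      · subst h
        have : (τ ++ [a]).get ⟨τ.length, he'⟩ = a := by
          simp [List.get_eq_getElem]
        rw [this] at hval
        exact hap hval
    have := hmax hPa (by simp)
    simp at this
end
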